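/- Let T be a closed densely defined unbounded operator between real Hilbert spaces H and K with ‖Tu‖_K ≥ α‖u‖_H for all u ∈ D(T) and some α > 0, and let Q be the orthogonal projection of K onto ker T*. Let ℓ : D(T*) → ℝ be a linear functional for which there exists C ≥ 0 with |ℓ(Ψ)| ≤ C (‖Ψ‖_K² + ‖T*Ψ‖_H²)^{1/2} for all Ψ ∈ D(T*). Then there exists a unique Φ_b ∈ D(T*) such that for all Ψ ∈ D(T*): ⟨QΦ_b, Ψ⟩_K + ⟨T*Φ_b, T*Ψ⟩_H = ℓ(Ψ). -/

import Mathlib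

open scoped LinearPMap RealInnerProductSpace

section Aux

variable {H K : Type*}
    [NormedAddCommGroup H] [InnerProductSpace ℝ H] [CompleteSpace H]
    [NormedAddCommGroup K] [InnerProductSpace ℝ K] [CompleteSpace K]

/-- helper: value of a `LinearPMap` from graph membership. -/
theorem LinearPMap.apply_of_mem_graph' (f : K →ₗ.[ℝ] H) {x : K} {y : H}
    (h : (x, y) ∈ f.graph) (hx : x ∈ f.domain) : f ⟨x, hx⟩ = y := by
  obtain ⟨u, hu⟩ := f.mem_graph_iff.mp h
  have h1 : (u : K) = x := hu.1
  have h2 : f u = y := hu.2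
  rw [← h2]
  exact congrArg f (Subtype.ext h1.symm)

/-- The graph of the adjoint, as a submodule of `WithLp 2 (K × H)`. -/
noncomputable def adjGraphL2 (T : H →ₗ.[ℝ] K) : Submodule ℝ (WithLp 2 (K × H)) :=
  T.adjoint.graph.comap (WithLp.linearEquiv 2 ℝ (K × H)).toLinearMap

theorem mem_adjGraphL2 (T : H →ₗ.[ℝ] K) (p : WithLp 2 (K × H)) :
    p ∈ adjGraphL2 T ↔ (p.fst, p.snd) ∈ T.adjoint.graph := Iff.rfl

theorem mem_adjGraphL2_iff (T : H →ₗ.[ℝ] K) (hTdense : Dense (T.domain : Set H))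
    (p : WithLp 2 (K × H)) :
    p ∈ adjGraphL2 T ↔ ∀ u : T.domain, ⟪p.snd, (u : H)⟫ = ⟪p.fst, T u⟫ := by
  rw [mem_adjGraphL2]
  constructor
  · intro h u
    obtain ⟨y, hy⟩ := T.adjoint.mem_graph_iff.mp h
    have h1 : (y : K) = p.fst := hy.1
    have h2 : T.adjoint y = p.snd := hy.2
    rw [← h1, ← h2]
    exact T.adjoint_isFormalAdjoint hTdense y u
  · intro h
    have hx : p.fst ∈ T.adjoint.domain :=
      T.mem_adjoint_domain_of_exists p.fst ⟨p.snd, h⟩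
    have := T.adjoint_apply_eq hTdense ⟨p.fst, hx⟩ (x₀ := p.snd) h
    rw [← this]
    exact T.adjoint.mem_graph ⟨p.fst, hx⟩

theorem isClosed_adjGraphL2 (T : H →ₗ.[ℝ] K) (hTdense : Dense (T.domain : Set H)) :
    IsClosed ((adjGraphL2 T : Set (WithLp 2 (K × H)))) := by
  have hset : (adjGraphL2 T : Set (WithLp 2 (K × H))) =
      ⋂ u : T.domain, {p : WithLp 2 (K × H) | ⟪p.snd, (u : H)⟫ = ⟪p.fst, T u⟫} := by
    ext p
    simp only [Set.mem_iInter, Set.mem_setOf_eq, SetLike.mem_coe,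
      mem_adjGraphL2_iff T hTdense]
  rw [hset]
  refine isClosed_iInter fun u => isClosed_eq ?_ ?_
  · exact Continuous.inner
      (continuous_snd.comp (WithLp.prodContinuousLinearEquiv 2 ℝ K H).continuous)
      continuous_const
  · exact Continuous.inner
      (continuous_fst.comp (WithLp.prodContinuousLinearEquiv 2 ℝ K H).continuous)
      continuous_const

/-- The linear equivalence between the domain of the adjoint and its graph in `WithLp 2`. -/
noncomputable def domEquivGraph (T : H →ₗ.[ℝ] K) :
    T.adjoint.domain ≃ₗ[ℝ] adjGraphL2 T where
  toFun Ψ := ⟨(WithLp.equiv 2 (K × H)).symm ((Ψ : K), T.adjoint Ψ),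
    T.adjoint.mem_graph Ψ⟩
  map_add' Ψ Ψ' := by
    apply Subtype.ext
    apply (WithLp.equiv 2 (K × H)).injective
    simp [Prod.ext_iff, LinearPMap.map_add]
  map_smul' c Ψ := by
    apply Subtype.ext
    apply (WithLp.equiv 2 (K × H)).injective
    simp [Prod.ext_iff, LinearPMap.map_smul]
  invFun g := ⟨(g : WithLp 2 (K × H)).fst, LinearPMap.mem_domain_of_mem_graph
    ((mem_adjGraphL2 T (g : WithLp 2 (K × H))).mp g.2)⟩
  left_inv Ψ := Subtype.ext rfl
  right_inv g := by
    apply Subtype.ext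
    apply (WithLp.equiv 2 (K × H)).injective
    refine Prod.ext rfl ?_
    exact LinearPMap.apply_of_mem_graph' T.adjoint
      ((mem_adjGraphL2 T (g : WithLp 2 (K × H))).mp g.2) _

theorem domEquivGraph_fst (T : H →ₗ.[ℝ] K) (Ψ : T.adjoint.domain) :
    ((domEquivGraph T Ψ : WithLp 2 (K × H))).fst = (Ψ : K) := rfl

theorem domEquivGraph_snd (T : H →ₗ.[ℝ] K) (Ψ : T.adjoint.domain) :
    ((domEquivGraph T Ψ : WithLp 2 (K × H))).snd = T.adjoint Ψ := rfl

theorem norm_domEquivGraph (T : H →ₗ.[ℝ] K) (Ψ : T.adjoint.domain) :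
    ‖domEquivGraph T Ψ‖ = Real.sqrt (‖(Ψ : K)‖ ^ 2 + ‖T.adjoint Ψ‖ ^ 2) := by
  have h0 : ‖domEquivGraph T Ψ‖ = ‖(domEquivGraph T Ψ : WithLp 2 (K × H))‖ := rfl
  rw [h0, WithLp.prod_norm_eq_of_L2, domEquivGraph_fst, domEquivGraph_snd]

end Aux

set_option maxHeartbeats 1000000 in
/-- **Unique solvability of the lifting problem** (equation (eq:V:Lift) of the paper, via
Lax–Milgram).  Let `T` be a closed densely defined unbounded operator between real Hilbert
spaces `H`, `K` with `‖Tu‖ ≥ α‖u‖` for all `u ∈ D(T)`, `α > 0`, and let `Q` be the orthogonal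
projection of `K` onto `N = ker T*`.  If `ℓ` is a linear functional on `D(T*)` bounded for the
graph norm, then there is a unique `Φ_b ∈ D(T*)` with
`⟨QΦ_b, Ψ⟩ + ⟨T*Φ_b, T*Ψ⟩ = ℓ(Ψ)` for all `Ψ ∈ D(T*)`. -/
theorem lifting_problem_unique_solution
    {H K : Type*}
    [NormedAddCommGroup H] [InnerProductSpace ℝ H] [CompleteSpace H]
    [NormedAddCommGroup K] [InnerProductSpace ℝ K] [CompleteSpace K]
    (T : H →ₗ.[ℝ] K)
    (hTdense : Dense (T.domain : Set H))
    (hTclosed : T.IsClosed)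
    (α : ℝ) (hα : 0 < α)
    (hbound : ∀ u : T.domain, α * ‖(u : H)‖ ≤ ‖T u‖)
    (N : Submodule ℝ K)
    (hN : ∀ w : K, w ∈ N ↔ ∃ hw : w ∈ T.adjoint.domain, T.adjoint ⟨w, hw⟩ = 0)
    (Q : K →L[ℝ] K)
    (hQmem : ∀ w : K, Q w ∈ N)
    (hQorth : ∀ w : K, w - Q w ∈ Nᗮ)
    (ℓ : T.adjoint.domain →ₗ[ℝ] ℝ)
    (C : ℝ) (hC : 0 ≤ C)
    (hℓ : ∀ Ψ : T.adjoint.domain,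
      |ℓ Ψ| ≤ C * Real.sqrt (‖(Ψ : K)‖ ^ 2 + ‖T.adjoint Ψ‖ ^ 2)) :
    ∃! Φb : T.adjoint.domain,
      ∀ Ψ : T.adjoint.domain,
        ⟪Q (Φb : K), (Ψ : K)⟫ + ⟪T.adjoint Φb, T.adjoint Ψ⟫ = ℓ Ψ := by
  classical
  -- basic facts about the projection Q
  have hQ_inner : ∀ w : K, ⟪Q w, w⟫ = ‖Q w‖ ^ 2 := by
    intro w
    have h0 : ⟪Q w, w - Q w⟫ = 0 :=
      (Submodule.mem_orthogonal N (w - Q w)).mp (hQorth w) (Q w) (hQmem w)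
    have h1 : ⟪Q w, w⟫ = ⟪Q w, Q w⟫ + ⟪Q w, w - Q w⟫ := by
      rw [← inner_add_right]
      congr 1
      abel
    rw [h1, h0, real_inner_self_eq_norm_sq]
    ring
  have hQ_id : ∀ n ∈ N, Q n = n := by
    intro n hn
    have h1 : n - Q n ∈ N := N.sub_mem hn (hQmem n)
    have h2 := (Submodule.mem_orthogonal N (n - Q n)).mp (hQorth n) _ h1
    have h3 : n - Q n = 0 := inner_self_eq_zero.mp h2
    exact (sub_eq_zero.mp h3).symm
  -- abstract Poincaré inequality
  have hPoin : ∀ Ψ : T.adjoint.domain, (Ψ : K) ∈ Nᗮ → α * ‖(Ψ : K)‖ ≤ ‖T.adjoint Ψ‖ := by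
    intro Ψ hΨ
    set R : Submodule ℝ K := LinearMap.range T.toFun with hR
    have hRN : Rᗮ ≤ N := by
      intro w hw
      have hw' : ∀ u : T.domain, ⟪w, T u⟫ = 0 := by
        intro u
        have hmem : T u ∈ R := LinearMap.mem_range_self T.toFun u
        have := (Submodule.mem_orthogonal R w).mp hw _ hmem
        rwa [real_inner_comm] at this
      have hwdom : w ∈ T.adjoint.domain :=
        T.mem_adjoint_domain_of_exists w
          ⟨0, fun u => by rw [inner_zero_left]; exact (hw' u).symm⟩
      exact (hN w).mpr ⟨hwdom, T.adjoint_apply_eq hTdense ⟨w, hwdom⟩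
        (fun u => by rw [inner_zero_left]; exact (hw' u).symm)⟩
    have hclos : (Ψ : K) ∈ closure (R : Set K) := by
      rw [← Submodule.topologicalClosure_coe, ← Submodule.orthogonal_orthogonal_eq_closure]
      exact Submodule.orthogonal_le hRN hΨ
    have hkey : ∀ w ∈ closure (R : Set K),
        α * ⟪(Ψ : K), w⟫ ≤ ‖T.adjoint Ψ‖ * ‖w‖ := by
      intro w hw
      have hclosed : IsClosed {w : K | α * ⟪(Ψ : K), w⟫ ≤ ‖T.adjoint Ψ‖ * ‖w‖} :=
        isClosed_le (continuous_const.mul (Continuous.inner continuous_const continuous_id))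
          (continuous_const.mul continuous_norm)
      refine closure_minimal ?_ hclosed hw
      rintro _ ⟨u, rfl⟩
      have h1 : ⟪(Ψ : K), T u⟫ = ⟪T.adjoint Ψ, (u : H)⟫ :=
        (T.adjoint_isFormalAdjoint hTdense Ψ u).symm
      have h2 : ⟪T.adjoint Ψ, (u : H)⟫ ≤ ‖T.adjoint Ψ‖ * ‖(u : H)‖ :=
        real_inner_le_norm _ _
      calc α * ⟪(Ψ : K), T u⟫ = α * ⟪T.adjoint Ψ, (u : H)⟫ := by rw [h1]
        _ ≤ α * (‖T.adjoint Ψ‖ * ‖(u : H)‖) :=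
            mul_le_mul_of_nonneg_left h2 hα.le
        _ = ‖T.adjoint Ψ‖ * (α * ‖(u : H)‖) := by ring
        _ ≤ ‖T.adjoint Ψ‖ * ‖T u‖ :=
            mul_le_mul_of_nonneg_left (hbound u) (norm_nonneg _)
    have hfin := hkey (Ψ : K) hclos
    rw [real_inner_self_eq_norm_sq] at hfin
    rcases eq_or_lt_of_le (norm_nonneg (Ψ : K)) with h0 | h0
    · rw [← h0, mul_zero]
      exact norm_nonneg _
    · have hfin' : (α * ‖(Ψ : K)‖) * ‖(Ψ : K)‖ ≤ ‖T.adjoint Ψ‖ * ‖(Ψ : K)‖ := by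
        nlinarith [hfin]
      exact le_of_mul_le_mul_right hfin' h0
  -- quantitative graph-norm bound
  have hdecomp : ∀ Ψ : T.adjoint.domain,
      ‖(Ψ : K)‖ ^ 2 + ‖T.adjoint Ψ‖ ^ 2 ≤
        (1 + α⁻¹ ^ 2) * (‖Q (Ψ : K)‖ ^ 2 + ‖T.adjoint Ψ‖ ^ 2) := by
    intro Ψ
    obtain ⟨hdom, hzero⟩ := (hN (Q (Ψ : K))).mp (hQmem (Ψ : K))
    set n : T.adjoint.domain := ⟨Q (Ψ : K), hdom⟩ with hn
    set Δ : T.adjoint.domain := Ψ - n with hΔdef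
    have hΔcoe : (Δ : K) = (Ψ : K) - Q (Ψ : K) := rfl
    have hΔorth : (Δ : K) ∈ Nᗮ := by rw [hΔcoe]; exact hQorth _
    have hΔadj : T.adjoint Δ = T.adjoint Ψ := by
      rw [hΔdef, LinearPMap.map_sub, hzero, sub_zero]
    have hP := hPoin Δ hΔorth
    rw [hΔadj] at hP
    have hΔnorm : ‖(Δ : K)‖ ≤ α⁻¹ * ‖T.adjoint Ψ‖ :=
      (le_inv_mul_iff₀ hα).mpr hP
    have hortho : ⟪Q (Ψ : K), (Δ : K)⟫ = 0 :=
      (Submodule.mem_orthogonal N (Δ : K)).mp hΔorth _ (hQmem _)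
    have hpyth : ‖(Ψ : K)‖ ^ 2 = ‖Q (Ψ : K)‖ ^ 2 + ‖(Δ : K)‖ ^ 2 := by
      have hsum : (Ψ : K) = Q (Ψ : K) + (Δ : K) := by rw [hΔcoe]; abel
      have h := norm_add_sq_real (Q (Ψ : K)) (Δ : K)
      rw [hortho, ← hsum] at h
      linarith
    have h2 : ‖(Δ : K)‖ ^ 2 ≤ α⁻¹ ^ 2 * ‖T.adjoint Ψ‖ ^ 2 := by
      nlinarith [norm_nonneg (Δ : K), norm_nonneg (T.adjoint Ψ), hΔnorm]
    nlinarith [sq_nonneg ‖T.adjoint Ψ‖, sq_nonneg ‖Q (Ψ : K)‖, sq_nonneg α⁻¹,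
      mul_nonneg (sq_nonneg α⁻¹) (sq_nonneg ‖Q (Ψ : K)‖)]
  -- the graph Hilbert space
  haveI : CompleteSpace (adjGraphL2 T) := (isClosed_adjGraphL2 T hTdense).completeSpace_coe
  set e := domEquivGraph T with he
  -- norms of components
  have hcoe_norm : ∀ g : adjGraphL2 T, ‖g‖ = ‖(g : WithLp 2 (K × H))‖ := fun g => rfl
  let j1 : adjGraphL2 T →L[ℝ] K :=
    (ContinuousLinearMap.fst ℝ K H).comp
      (((WithLp.prodContinuousLinearEquiv 2 ℝ K H) :
          WithLp 2 (K × H) →L[ℝ] K × H).comp (adjGraphL2 T).subtypeL)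
  let j2 : adjGraphL2 T →L[ℝ] H :=
    (ContinuousLinearMap.snd ℝ K H).comp
      (((WithLp.prodContinuousLinearEquiv 2 ℝ K H) :
          WithLp 2 (K × H) →L[ℝ] K × H).comp (adjGraphL2 T).subtypeL)
  have hj1e : ∀ Ψ : T.adjoint.domain, j1 (e Ψ) = (Ψ : K) := fun Ψ => rfl
  have hj2e : ∀ Ψ : T.adjoint.domain, j2 (e Ψ) = T.adjoint Ψ := fun Ψ => rfl
  have hnormsq : ∀ g : adjGraphL2 T, ‖j1 g‖ ^ 2 + ‖j2 g‖ ^ 2 = ‖g‖ ^ 2 := by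
    intro g
    rw [hcoe_norm g, WithLp.prod_norm_sq_eq_of_L2]
    rfl
  have hj1 : ∀ g : adjGraphL2 T, ‖j1 g‖ ≤ ‖g‖ := by
    intro g
    have h1 := hnormsq g
    nlinarith [norm_nonneg g, norm_nonneg (j1 g), sq_nonneg ‖j2 g‖]
  have hj2 : ∀ g : adjGraphL2 T, ‖j2 g‖ ≤ ‖g‖ := by
    intro g
    have h1 := hnormsq g
    nlinarith [norm_nonneg g, norm_nonneg (j2 g), sq_nonneg ‖j1 g‖]
  -- the continuous functional
  let ℓV : adjGraphL2 T →L[ℝ] ℝ :=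
    LinearMap.mkContinuous
      (ℓ ∘ₗ (e.symm : adjGraphL2 T ≃ₗ[ℝ] T.adjoint.domain).toLinearMap) C (by
      intro g
      have h1 : ‖g‖ =
          Real.sqrt (‖((e.symm g : T.adjoint.domain) : K)‖ ^ 2 +
            ‖T.adjoint (e.symm g)‖ ^ 2) := by
        conv_lhs => rw [← e.apply_symm_apply g]
        exact norm_domEquivGraph T (e.symm g)
      have h2 := hℓ (e.symm g)
      rw [← h1] at h2
      simpa [Real.norm_eq_abs] using h2)
  have hℓV : ∀ Ψ : T.adjoint.domain, ℓV (e Ψ) = ℓ Ψ := by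
    intro Ψ
    have h0 : ℓV (e Ψ) = ℓ (e.symm (e Ψ)) := rfl
    rw [h0, e.symm_apply_apply]
  -- the bilinear form
  let Blin : adjGraphL2 T →ₗ[ℝ] adjGraphL2 T →ₗ[ℝ] ℝ :=
    ((innerₗ K).compl₁₂ ((Q : K →ₗ[ℝ] K).comp (j1 : adjGraphL2 T →ₗ[ℝ] K))
        (j1 : adjGraphL2 T →ₗ[ℝ] K)) +
      ((innerₗ H).compl₁₂ (j2 : adjGraphL2 T →ₗ[ℝ] H)
        (j2 : adjGraphL2 T →ₗ[ℝ] H))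
  have hBlin : ∀ g h : adjGraphL2 T,
      Blin g h = ⟪Q (j1 g), j1 h⟫ + ⟪j2 g, j2 h⟫ := fun g h => rfl
  let B : adjGraphL2 T →L[ℝ] adjGraphL2 T →L[ℝ] ℝ :=
    LinearMap.mkContinuous₂ Blin (‖Q‖ + 1) (by
      intro g h
      rw [hBlin, Real.norm_eq_abs]
      calc |⟪Q (j1 g), j1 h⟫ + ⟪j2 g, j2 h⟫|
          ≤ |⟪Q (j1 g), j1 h⟫| + |⟪j2 g, j2 h⟫| := abs_add_le _ _
        _ ≤ ‖Q (j1 g)‖ * ‖j1 h‖ + ‖j2 g‖ * ‖j2 h‖ :=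
            add_le_add (abs_real_inner_le_norm _ _) (abs_real_inner_le_norm _ _)
        _ ≤ (‖Q‖ * ‖j1 g‖) * ‖j1 h‖ + ‖j2 g‖ * ‖j2 h‖ := by
            gcongr
            exact Q.le_opNorm _
        _ ≤ (‖Q‖ * ‖g‖) * ‖h‖ + ‖g‖ * ‖h‖ := by
            gcongr <;>
              first
                | exact norm_nonneg Q
                | exact hj1 g
                | exact hj1 h
                | exact hj2 g
                | exact hj2 h
        _ = (‖Q‖ + 1) * ‖g‖ * ‖h‖ := by ring)
  have hBapply : ∀ g h : adjGraphL2 T,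
      B g h = ⟪Q (j1 g), j1 h⟫ + ⟪j2 g, j2 h⟫ := fun g h => hBlin g h
  have hBe : ∀ Φ Ψ : T.adjoint.domain,
      B (e Φ) (e Ψ) = ⟪Q (Φ : K), (Ψ : K)⟫ + ⟪T.adjoint Φ, T.adjoint Ψ⟫ := by
    intro Φ Ψ
    rw [hBapply, hj1e, hj2e, hj1e, hj2e]
  -- coercivity
  have hcpos : (0 : ℝ) < 1 + α⁻¹ ^ 2 := by positivity
  have coercive : IsCoercive B := by
    refine ⟨(1 + α⁻¹ ^ 2)⁻¹, by positivity, ?_⟩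
    intro g
    obtain ⟨Ψ, rfl⟩ := e.surjective g
    have h1 : B (e Ψ) (e Ψ) = ‖Q (Ψ : K)‖ ^ 2 + ‖T.adjoint Ψ‖ ^ 2 := by
      rw [hBe, hQ_inner, real_inner_self_eq_norm_sq]
    have h2 : ‖e Ψ‖ * ‖e Ψ‖ = ‖(Ψ : K)‖ ^ 2 + ‖T.adjoint Ψ‖ ^ 2 := by
      rw [he, norm_domEquivGraph]
      exact Real.mul_self_sqrt (by positivity)
    rw [h1, mul_assoc, h2, inv_mul_le_iff₀ hcpos]
    exact hdecomp Ψ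
  -- Lax–Milgram
  set v : adjGraphL2 T :=
    coercive.continuousLinearEquivOfBilin.symm
      ((InnerProductSpace.toDual ℝ (adjGraphL2 T)).symm ℓV) with hv
  have hveq : ∀ w : adjGraphL2 T, B v w = ℓV w := by
    intro w
    rw [← coercive.continuousLinearEquivOfBilin_apply, hv,
      ContinuousLinearEquiv.apply_symm_apply, InnerProductSpace.toDual_symm_apply]
  refine ⟨e.symm v, ?_, ?_⟩
  · intro Ψ
    have h1 := hveq (e Ψ)
    rw [hℓV] at h1
    have h2 : v = e (e.symm v) := (e.apply_symm_apply v).symm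
    rw [h2, hBe] at h1
    exact h1
  · intro Φ' hΦ'
    have hΦb : ∀ Ψ : T.adjoint.domain,
        ⟪Q ((e.symm v : T.adjoint.domain) : K), (Ψ : K)⟫ +
          ⟪T.adjoint (e.symm v), T.adjoint Ψ⟫ = ℓ Ψ := by
      intro Ψ
      have h1 := hveq (e Ψ)
      rw [hℓV] at h1
      have h2 : v = e (e.symm v) := (e.apply_symm_apply v).symm
      rw [h2, hBe] at h1
      exact h1
    set Δ : T.adjoint.domain := Φ' - e.symm v with hΔdef
    have hΔeq : ∀ Ψ : T.adjoint.domain,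
        ⟪Q (Δ : K), (Ψ : K)⟫ + ⟪T.adjoint Δ, T.adjoint Ψ⟫ = 0 := by
      intro Ψ
      have hcoe : (Δ : K) = (Φ' : K) - ((e.symm v : T.adjoint.domain) : K) := rfl
      have hadj : T.adjoint Δ = T.adjoint Φ' - T.adjoint (e.symm v) := by
        rw [hΔdef, LinearPMap.map_sub]
      rw [hcoe, hadj, map_sub, inner_sub_left, inner_sub_left]
      have := hΦ' Ψ
      have := hΦb Ψ
      linarith
    have hΔΔ := hΔeq Δ
    rw [hQ_inner, real_inner_self_eq_norm_sq] at hΔΔ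
    have hQΔ : ‖Q (Δ : K)‖ = 0 := by
      nlinarith [sq_nonneg ‖Q (Δ : K)‖, sq_nonneg ‖T.adjoint Δ‖]
    have hTΔ : ‖T.adjoint Δ‖ = 0 := by
      nlinarith [sq_nonneg ‖Q (Δ : K)‖, sq_nonneg ‖T.adjoint Δ‖]
    have hTΔ' : T.adjoint Δ = 0 := norm_eq_zero.mp hTΔ
    have hΔN : (Δ : K) ∈ N := by
      refine (hN (Δ : K)).mpr ⟨Δ.2, ?_⟩
      rw [← hTΔ']
    have hΔ0 : (Δ : K) = 0 := by
      have := hQ_id _ hΔN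
      rw [norm_eq_zero] at hQΔ
      rw [← this, hQΔ]
    have : Δ = 0 := Subtype.ext hΔ0
    have := sub_eq_zero.mp (hΔdef ▸ this)
    exact this
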